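/- Let (Z,d) be a proper metric space, X,Y ⊆ Z closed, x₀ ∈ X, y₀ ∈ Y, r > 0, ε > 0. Suppose d(x₀,y₀) ≤ ε, B_X(x₀,r) ⊆_ε Y and B_Y(y₀,r) ⊆_ε X. Define K = {y ∈ Y : dist(y, B_X(x₀,r)) ≤ ε}. Then K is a compact subset of Y satisfying B_Y(y₀, r−2ε) ⊆ K ⊆ B_Y(y₀, r+2ε) and the Hausdorff distance between B_X(x₀,r) and K is at most ε. -/

import Mathlib

open Metric Set

/-- construction of the compact set `K` approximating the ball of `X` within `Y`. -/
theorem stmt2 {Z : Type*} [MetricSpace Z] [ProperSpace Z]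
    (X Y : Set Z) (hX : IsClosed X) (hY : IsClosed Y)
    (x₀ y₀ : Z) (hx₀ : x₀ ∈ X) (hy₀ : y₀ ∈ Y)
    (r ε : ℝ) (hr : 0 < r) (hε : 0 < ε)
    (hdist : dist x₀ y₀ ≤ ε)
    (hXY : ∀ z ∈ X ∩ closedBall x₀ r, ∃ y ∈ Y, dist z y ≤ ε)
    (hYX : ∀ z ∈ Y ∩ closedBall y₀ r, ∃ x ∈ X, dist z x ≤ ε)
    (K : Set Z)
    (hK : K = {y ∈ Y | Metric.infDist y (X ∩ closedBall x₀ r) ≤ ε}) :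
    IsCompact K ∧ K ⊆ Y ∧
    Y ∩ closedBall y₀ (r - 2 * ε) ⊆ K ∧
    K ⊆ Y ∩ closedBall y₀ (r + 2 * ε) ∧
    Metric.hausdorffDist (X ∩ closedBall x₀ r) K ≤ ε := by
  set A := X ∩ closedBall x₀ r with hA
  have hx₀A : x₀ ∈ A := ⟨hx₀, mem_closedBall_self hr.le⟩
  have hAne : A.Nonempty := ⟨x₀, hx₀A⟩
  have hAcomp : IsCompact A :=
    (isCompact_closedBall x₀ r).of_isClosed_subset
      (hX.inter isClosed_closedBall) (inter_subset_right)
  -- membership in K gives a nearby point of A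
  have hKnear : ∀ y ∈ K, ∃ a ∈ A, dist y a ≤ ε := by
    intro y hy
    rw [hK] at hy
    obtain ⟨a, haA, hda⟩ := hAcomp.exists_infDist_eq_dist hAne y
    exact ⟨a, haA, hda ▸ hy.2⟩
  have hKY : K ⊆ Y := by intro y hy; rw [hK] at hy; exact hy.1
  have hKball : K ⊆ Y ∩ closedBall y₀ (r + 2 * ε) := by
    intro y hy
    obtain ⟨a, ⟨_, haball⟩, hda⟩ := hKnear y hy
    refine ⟨hKY hy, ?_⟩
    have := dist_triangle4 y a x₀ y₀
    simp only [mem_closedBall] at haball ⊢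
    calc dist y y₀ ≤ dist y a + dist a x₀ + dist x₀ y₀ := dist_triangle4 y a x₀ y₀
      _ ≤ ε + r + ε := by gcongr
      _ = r + 2 * ε := by ring
  have hKcomp : IsCompact K := by
    have hKclosed : IsClosed K := by
      rw [hK]
      exact hY.inter (isClosed_le (continuous_infDist_pt A) continuous_const)
    exact (isCompact_closedBall y₀ (r + 2 * ε)).of_isClosed_subset hKclosed
      (fun y hy => (hKball hy).2)
  have hsmall : Y ∩ closedBall y₀ (r - 2 * ε) ⊆ K := by
    intro y ⟨hyY, hyb⟩
    simp only [mem_closedBall] at hyb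
    have hyb' : y ∈ Y ∩ closedBall y₀ r := ⟨hyY, by simp only [mem_closedBall]; linarith⟩
    obtain ⟨x, hxX, hdx⟩ := hYX y hyb'
    have hxA : x ∈ A := by
      refine ⟨hxX, ?_⟩
      simp only [mem_closedBall]
      calc dist x x₀ ≤ dist x y + dist y y₀ + dist y₀ x₀ := dist_triangle4 x y y₀ x₀
        _ ≤ ε + (r - 2 * ε) + ε := by
            gcongr
            · rwa [dist_comm]
            · rwa [dist_comm]
        _ ≤ r := by linarith
    rw [hK]
    refine ⟨hyY, ?_⟩
    calc Metric.infDist y A ≤ dist y x := infDist_le_dist_of_mem hxA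
      _ ≤ ε := hdx
  have hKne : K.Nonempty := by
    obtain ⟨y, hyY, hdy⟩ := hXY x₀ hx₀A
    refine ⟨y, ?_⟩
    rw [hK]
    refine ⟨hyY, ?_⟩
    calc Metric.infDist y A ≤ dist y x₀ := infDist_le_dist_of_mem hx₀A
      _ ≤ ε := by rwa [dist_comm]
  refine ⟨hKcomp, hKY, hsmall, hKball, ?_⟩
  apply hausdorffDist_le_of_infDist hε.le
  · intro a haA
    obtain ⟨y, hyY, hdy⟩ := hXY a haA
    have hyK : y ∈ K := by
      rw [hK]
      exact ⟨hyY, le_trans (infDist_le_dist_of_mem haA) (by rwa [dist_comm])⟩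
    exact le_trans (infDist_le_dist_of_mem hyK) hdy
  · intro y hy
    rw [hK] at hy
    exact hy.2
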